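/- If f : [0,1] → ℝ is twice continuously differentiable, then for every x ∈ [0,1], lim_{n→∞} n (R_n(f;x) − f(x)) = (1/2) f″(x) x(1−x)(1 − min{x,1−x}). -/

import Mathlib

set_option maxHeartbeats 4000000

/-- Generalized rising factorial with increment `h`: `x^(m,h) = x(x+h)···(x+(m-1)h)`. -/
noncomputable def rfac (x h : ℝ) (m : ℕ) : ℝ := ∏ i ∈ Finset.range m, (x + i * h)

/-- Pólya urn probability `p_{n,k}^{a,b,c}`. -/
noncomputable def polyaProb (a b c : ℝ) (n k : ℕ) : ℝ :=
  (n.choose k : ℝ) * rfac a c k * rfac b c (n - k) / rfac (a + b) c n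

/-- The operator `R_n(f;x)` with `c = -min{x,1-x}/(n-1)`. -/
noncomputable def Rop (n : ℕ) (f : ℝ → ℝ) (x : ℝ) : ℝ :=
  ∑ k ∈ Finset.range (n + 1),
    polyaProb x (1 - x) (-(min x (1 - x)) / ((n : ℝ) - 1)) n k * f ((k : ℝ) / n)

/-- Modulus of continuity of `f` on `[a,b]`. -/
noncomputable def modulus (f : ℝ → ℝ) (a b δ : ℝ) : ℝ :=
  sSup {d : ℝ | ∃ u ∈ Set.Icc a b, ∃ v ∈ Set.Icc a b, |u - v| ≤ δ ∧ d = |f u - f v|}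

noncomputable def dfal (t : ℝ) (r : ℕ) : ℝ := ∏ i ∈ Finset.range r, (t - i)

noncomputable def Gpoly (x M t : ℝ) : ℝ :=
  3*x^2 + (-6)*x^2*M + 3*x^2*M^2 + (-6)*x^3 + 12*x^3*M + (-6)*x^3*M^2 + 3*x^4 + (-6)*x^4*M + 3*x^4*M^2 + x*t + (-7)*x*M*t + 12*x*M^2*t + (-6)*x*M^3*t + (-16)*x^2*t + 43*x^2*M*t + (-51)*x^2*M^2*t + 24*x^2*M^3*t + 30*x^3*t + (-72)*x^3*M*t + 78*x^3*M^2*t + (-36)*x^3*M^3*t + (-15)*x^4*t + 36*x^4*M*t + (-39)*x^4*M^2*t + 18*x^4*M^3*t + (-3)*x*t^2 + 15*x*M*t^2 + (-13)*x*M^2*t^2 + 30*x^2*t^2 + (-69)*x^2*M*t^2 + 49*x^2*M^2*t^2 + (-54)*x^3*t^2 + 108*x^3*M*t^2 + (-72)*x^3*M^2*t^2 + 27*x^4*t^2 + (-54)*x^4*M*t^2 + 36*x^4*M^2*t^2 + 3*x*t^3 + (-9)*x*M*t^3 + x*M^2*t^3 + (-24)*x^2*t^3 + 33*x^2*M*t^3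 + (-1)*x^2*M^2*t^3 + 42*x^3*t^3 + (-48)*x^3*M*t^3 + (-21)*x^4*t^3 + 24*x^4*M*t^3 + (-1)*x*t^4 + x*M*t^4 + 7*x^2*t^4 + (-1)*x^2*M*t^4 + (-12)*x^3*t^4 + 6*x^4*t^4
lemma rfac_succ (x h : ℝ) (m : ℕ) : rfac x h (m+1) = rfac x h m * (x + m*h) :=
  Finset.prod_range_succ _ _

lemma vandermonde (c : ℝ) : ∀ (n : ℕ) (a b : ℝ),
    ∑ k ∈ Finset.range (n+1), (n.choose k : ℝ) * rfac a c k * rfac b c (n-k)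
      = rfac (a+b) c n := by
  intro n
  induction n with
  | zero => intro a b; simp [rfac]
  | succ n ih =>
    intro a b
    rw [Finset.sum_range_succ']
    have h2 : ∀ k ∈ Finset.range (n+1),
        ((n+1).choose (k+1) : ℝ) * rfac a c (k+1) * rfac b c (n+1-(k+1))
        = (n.choose k : ℝ) * (rfac a c k * rfac b c (n-k)) * (a + k*c)
          + (n.choose (k+1) : ℝ) * rfac a c (k+1) * rfac b c (n-k) := by
      intro k hk
      rw [Nat.choose_succ_succ, Nat.succ_sub_succ]
      push_cast
      rw [rfac_succ]
      ring
    rw [Finset.sum_congr rfl h2, Finset.sum_add_distrib]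
    have h3 : (∑ k ∈ Finset.range (n+1), (n.choose (k+1) : ℝ) * rfac a c (k+1) * rfac b c (n-k))
          + ((n+1).choose 0 : ℝ) * rfac a c 0 * rfac b c (n+1-0)
        = ∑ k ∈ Finset.range (n+1),
            (n.choose k : ℝ) * (rfac a c k * rfac b c (n-k)) * (b + ((n:ℝ)-(k:ℝ))*c) := by
      have e1 : ∀ k ∈ Finset.range (n+1),
          (n.choose k : ℝ) * (rfac a c k * rfac b c (n-k)) * (b + ((n:ℝ)-(k:ℝ))*c)
          = (n.choose k : ℝ) * rfac a c k * rfac b c (n+1-k) := by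
        intro k hk
        have hk' : k ≤ n := Nat.lt_succ_iff.mp (Finset.mem_range.mp hk)
        have : n + 1 - k = (n - k) + 1 := by omega
        rw [this, rfac_succ]
        have : ((n - k : ℕ) : ℝ) = (n : ℝ) - (k : ℝ) := by
          push_cast [Nat.cast_sub hk']; ring
        rw [this]
        ring
      rw [Finset.sum_congr rfl e1]
      have e2 : ∑ k ∈ Finset.range (n+2), (n.choose k : ℝ) * rfac a c k * rfac b c (n+1-k)
          = ∑ k ∈ Finset.range (n+1), (n.choose k : ℝ) * rfac a c k * rfac b c (n+1-k) := by
        rw [Finset.sum_range_succ]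
        simp [Nat.choose_eq_zero_of_lt (Nat.lt_succ_self n)]
      rw [← e2]
      conv_rhs => rw [Finset.sum_range_succ']
      congr 1
      · apply Finset.sum_congr rfl
        intro k hk
        simp [Nat.succ_sub_succ]
      · simp
    rw [add_assoc, h3, ← Finset.sum_add_distrib]
    have h4 : ∀ k ∈ Finset.range (n+1),
        (n.choose k : ℝ) * (rfac a c k * rfac b c (n-k)) * (a + k*c)
          + (n.choose k : ℝ) * (rfac a c k * rfac b c (n-k)) * (b + ((n:ℝ)-(k:ℝ))*c)
        = ((n.choose k : ℝ) * rfac a c k * rfac b c (n-k)) * ((a+b) + (n:ℝ)*c) := by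
      intro k hk; ring
    rw [Finset.sum_congr rfl h4, ← Finset.sum_mul, ih, ← rfac_succ]


lemma dfal_zero (t : ℝ) : dfal t 0 = 1 := by simp [dfal]

lemma dfal_succ' (t : ℝ) (r : ℕ) : dfal t (r+1) = t * dfal (t-1) r := by
  unfold dfal
  rw [Finset.prod_range_succ']
  simp only [Nat.cast_zero, sub_zero]
  rw [mul_comm]
  congr 1
  exact Finset.prod_congr rfl fun i _ => by push_cast; ring

lemma rfac_zero (x h : ℝ) : rfac x h 0 = 1 := by simp [rfac]

lemma rfac_succ' (x h : ℝ) (m : ℕ) : rfac x h (m+1) = x * rfac (x+h) h m := by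
  unfold rfac
  rw [Finset.prod_range_succ']
  simp only [Nat.cast_zero, zero_mul, add_zero]
  rw [mul_comm]
  congr 1
  exact Finset.prod_congr rfl fun i _ => by push_cast; ring

lemma moments (c : ℝ) : ∀ (r n : ℕ) (a b : ℝ), r ≤ n →
    ∑ k ∈ Finset.range (n+1), (n.choose k : ℝ) * dfal k r * rfac a c k * rfac b c (n-k)
      = dfal n r * rfac a c r * rfac (a+b+r*c) c (n-r) := by
  intro r
  induction r with
  | zero =>
    intro n a b _
    simp only [dfal_zero, rfac_zero, mul_one, one_mul, Nat.cast_zero, zero_mul, add_zero, Nat.sub_zero]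
    exact vandermonde c n a b
  | succ r ih =>
    intro n a b hrn
    obtain ⟨m, rfl⟩ : ∃ m, n = m + 1 := ⟨n-1, by omega⟩
    have hrm : r ≤ m := by omega
    rw [Finset.sum_range_succ']
    have h0 : ((m+1).choose 0 : ℝ) * dfal ((0:ℕ):ℝ) (r+1) * rfac a c 0 * rfac b c (m+1-0) = 0 := by
      have hz : dfal ((0:ℕ):ℝ) (r+1) = 0 := by rw [dfal_succ']; simp
      rw [hz]; ring
    rw [h0, add_zero]
    have key : ∀ k ∈ Finset.range (m+1),
        ((m+1).choose (k+1) : ℝ) * dfal ((k+1:ℕ):ℝ) (r+1) * rfac a c (k+1) * rfac b c (m+1-(k+1))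
        = ((m:ℝ)+1) * a * ((m.choose k : ℝ) * dfal k r * rfac (a+c) c k * rfac b c (m-k)) := by
      intro k hk
      have hnat : (((m+1).choose (k+1) * (k+1) : ℕ) : ℝ) = (((m+1) * m.choose k : ℕ) : ℝ) := by
        exact_mod_cast congrArg (Nat.cast (R := ℝ)) (Nat.add_one_mul_choose_eq m k).symm
      push_cast at hnat
      have hd : dfal ((k+1:ℕ):ℝ) (r+1) = ((k:ℝ)+1) * dfal k r := by
        rw [show (((k+1):ℕ):ℝ) = ((k:ℝ)+1) by push_cast; ring, dfal_succ']
        norm_num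
      rw [Nat.succ_sub_succ, hd, rfac_succ' a c k]
      linear_combination (a * dfal (k:ℝ) r * rfac (a+c) c k * rfac b c (m-k)) * hnat
    rw [Finset.sum_congr rfl key, ← Finset.mul_sum, ih m (a+c) b hrm]
    rw [Nat.succ_sub_succ]
    have e1 : dfal ((m+1:ℕ):ℝ) (r+1) = ((m:ℝ)+1) * dfal m r := by
      rw [show (((m+1):ℕ):ℝ) = ((m:ℝ)+1) by push_cast; ring, dfal_succ']
      norm_num
    have e2 : a + c + b + (r:ℝ)*c = a + b + (((r:ℕ)+1:ℕ):ℝ)*c := by push_cast; ring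
    rw [e1, rfac_succ' a c r, ← e2]
    ring

lemma rfac_add (x h : ℝ) (p q : ℕ) :
    rfac x h (p + q) = rfac x h p * rfac (x + p*h) h q := by
  unfold rfac
  rw [Finset.prod_range_add]
  congr 1
  exact Finset.prod_congr rfl fun i _ => by push_cast; ring

lemma rfac_eval0 (y c : ℝ) : rfac y c 0 = 1 := by simp [rfac]
lemma dfal_eval0 (t : ℝ) : dfal t 0 = 1 := by simp [dfal]
lemma rfac_eval1 (y c : ℝ) : rfac y c 1 = y := by norm_num [rfac, Finset.prod_range_succ]
lemma rfac_eval2 (y c : ℝ) : rfac y c 2 = y*(y+c) := by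
  norm_num [rfac, Finset.prod_range_succ]
lemma rfac_eval3 (y c : ℝ) : rfac y c 3 = y*(y+c)*(y+2*c) := by
  norm_num [rfac, Finset.prod_range_succ]
lemma rfac_eval4 (y c : ℝ) : rfac y c 4 = y*(y+c)*(y+2*c)*(y+3*c) := by
  norm_num [rfac, Finset.prod_range_succ]
lemma dfal_eval1 (t : ℝ) : dfal t 1 = t := by norm_num [dfal, Finset.prod_range_succ]
lemma dfal_eval2 (t : ℝ) : dfal t 2 = t*(t-1) := by norm_num [dfal, Finset.prod_range_succ]
lemma dfal_eval3 (t : ℝ) : dfal t 3 = t*(t-1)*(t-2) := by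
  norm_num [dfal, Finset.prod_range_succ]
lemma dfal_eval4 (t : ℝ) : dfal t 4 = t*(t-1)*(t-2)*(t-3) := by
  norm_num [dfal, Finset.prod_range_succ]

lemma algebra2 (n c x M : ℝ) (hM : M = -(c*(n-1))) (hn : n ≠ 0) (hn1 : n - 1 ≠ 0)
    (h1 : 1 + c ≠ 0) :
    (n*(n-1) * (x*(x+c)) / (1*(1+c)) + (1 - 2*n*x) * (n*x) + (n*x)^2 * 1) / n
    = x*(1-x)*(1 - M - 1/n) / (1 - (1+M)*(1/n)) := by
  subst hM
  rw [show 1 - (1 + -(c*(n-1)))*(1/n) = (n-1)*(1+c)/n from by field_simp; ring]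
  field_simp
  ring

lemma algebra4 (n c x M : ℝ) (hM : M = -(c*(n-1))) (hn : n ≠ 0) (hn1 : n - 1 ≠ 0)
    (h1 : 1 + c ≠ 0) (h2 : 1 + 2*c ≠ 0) (h3 : 1 + 3*c ≠ 0) :
    (n*(n-1)*(n-2)*(n-3) * (x*(x+c)*(x+2*c)*(x+3*c)) / (1*(1+c)*(1+2*c)*(1+3*c))
      + (6 - 4*n*x) * (n*(n-1)*(n-2) * (x*(x+c)*(x+2*c)) / (1*(1+c)*(1+2*c)))
      + (7 - 12*n*x + 6*n^2*x^2) * (n*(n-1) * (x*(x+c)) / (1*(1+c)))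
      + (1 - 4*n*x + 6*n^2*x^2 - 4*n^3*x^3) * (n*x)
      + (n*x)^4 * 1) / n^3
    = (1/n) * Gpoly x M (1/n)
        / ((1 - 1/n - M*(1/n)) * (1 - 1/n - 2*M*(1/n)) * (1 - 1/n - 3*M*(1/n))) := by
  subst hM
  have key : ∀ j : ℝ, 1 + j*c ≠ 0 → 1 - 1/n - (-(c*(n-1)))*j*(1/n) ≠ 0 := by
    intro j hj
    have : 1 - 1/n - (-(c*(n-1)))*j*(1/n) = (n-1)*(1+j*c)/n := by field_simp; ring
    rw [this]
    exact div_ne_zero (mul_ne_zero hn1 hj) hn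
  rw [show 1 - 1/n - (-(c*(n-1)))*(1/n) = (n-1)*(1+c)/n from by field_simp; ring,
     show 1 - 1/n - 2*(-(c*(n-1)))*(1/n) = (n-1)*(1+2*c)/n from by field_simp; ring,
     show 1 - 1/n - 3*(-(c*(n-1)))*(1/n) = (n-1)*(1+3*c)/n from by field_simp; ring]
  simp only [Gpoly]
  field_simp
  ring

lemma taylor_xi (f f' f'' : ℝ → ℝ)
    (hf : ∀ t ∈ Set.Icc (0 : ℝ) 1, HasDerivAt f (f' t) t)
    (hf' : ∀ t ∈ Set.Icc (0 : ℝ) 1, HasDerivAt f' (f'' t) t)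
    (x t : ℝ) (hx : x ∈ Set.Icc (0:ℝ) 1) (ht : t ∈ Set.Icc (0:ℝ) 1) :
    ∃ ξ ∈ Set.Icc (0:ℝ) 1, |ξ - x| ≤ |t - x| ∧
      f t = f x + f' x * (t-x) + f'' ξ / 2 * (t-x)^2 := by
  by_cases hteq : t = x
  · exact ⟨x, hx, by simp [hteq]⟩
  have htx2 : (t - x)^2 ≠ 0 := pow_ne_zero _ (sub_ne_zero.mpr hteq)
  set K := (f t - f x - f' x * (t-x)) * 2 / (t-x)^2 with hK
  set g : ℝ → ℝ := fun s => f t - f s - f' s * (t-s) - K*(t-s)^2/2 with hg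
  have hgd : ∀ s ∈ Set.Icc (0:ℝ) 1, HasDerivAt g ((t-s) * (K - f'' s)) s := by
    intro s hs
    have h1 := hf s hs
    have h2 := hf' s hs
    have : HasDerivAt g (0 - f' s - ((f'' s) * (t-s) + f' s * (-1)) - K*(2*(t-s)*(-1))/2) s := by
      apply HasDerivAt.sub
      apply HasDerivAt.sub
      apply HasDerivAt.sub
      · exact hasDerivAt_const _ _
      · exact h1
      · exact h2.mul ((hasDerivAt_id s).const_sub t)
      · have hq : HasDerivAt (fun s => (t-s)^2) (2*(t-s)*(-1)) s := by
          simpa using (((hasDerivAt_id s).const_sub t).fun_pow 2)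
        simpa [mul_div_assoc] using (hq.const_mul K).div_const 2
    convert this using 1
    ring
  have hgx : g x = 0 := by
    rw [hg]
    simp only
    rw [hK]
    field_simp
    ring
  have hgt : g t = 0 := by simp [hg]
  have hsub : Set.Icc (min x t) (max x t) ⊆ Set.Icc (0:ℝ) 1 := by
    apply Set.Icc_subset_Icc
    · exact le_min hx.1 ht.1
    · exact max_le hx.2 ht.2
  have hab : min x t < max x t := min_lt_max.mpr (fun h => hteq h.symm)
  have hvals : g (min x t) = g (max x t) := by
    rcases le_total x t with h | h
    · rw [min_eq_left h, max_eq_right h, hgx, hgt]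
    · rw [min_eq_right h, max_eq_left h, hgx, hgt]
  obtain ⟨ξ, hξmem, hξ0⟩ := exists_hasDerivAt_eq_zero hab
    (fun s hs => ((hgd s (hsub hs)).continuousAt).continuousWithinAt) hvals
    (fun s hs => hgd s (hsub (Set.Ioo_subset_Icc_self hs)))
  have hξIcc : ξ ∈ Set.Icc (0:ℝ) 1 := hsub (Set.Ioo_subset_Icc_self hξmem)
  have htξ : t - ξ ≠ 0 := by
    rcases le_total x t with h | h
    · rw [min_eq_left h, max_eq_right h] at hξmem
      intro he; rw [sub_eq_zero] at he; exact absurd hξmem.2 (by rw [← he]; exact lt_irrefl t)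
    · rw [min_eq_right h, max_eq_left h] at hξmem
      intro he; rw [sub_eq_zero] at he; exact absurd hξmem.1 (by rw [← he]; exact lt_irrefl t)
  have hKξ : K = f'' ξ := by
    rcases mul_eq_zero.mp hξ0 with h | h
    · exact absurd h htξ
    · linarith [sub_eq_zero.mp h]
  refine ⟨ξ, hξIcc, ?_, ?_⟩
  · rcases le_total x t with h | h
    · rw [min_eq_left h, max_eq_right h] at hξmem
      rw [abs_of_nonneg (by linarith [hξmem.1]), abs_of_nonneg (by linarith)]
      linarith [hξmem.2]
    · rw [min_eq_right h, max_eq_left h] at hξmem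
      rw [abs_of_nonpos (by linarith [hξmem.2]), abs_of_nonpos (by linarith)]
      linarith [hξmem.1]
  · rw [← hKξ, hK]
    field_simp
    ring
section setup
variable (x : ℝ) (hx : x ∈ Set.Icc (0:ℝ) 1) (n : ℕ) (hn : 2 ≤ n)

-- abbreviations
local notation "m" => min x (1-x)
local notation "cc" => -(min x (1-x)) / ((n:ℝ)-1)

include hx hn

lemma hm_nonneg : 0 ≤ m := le_min hx.1 (by linarith [hx.2])
lemma hm_half : m ≤ 1/2 := by
  rcases le_total x (1-x) with h | h
  · rw [min_eq_left h]; linarith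
  · rw [min_eq_right h]; linarith

lemma cc_bound {i : ℕ} (hi : i ≤ n - 1) : -(m) ≤ (i:ℝ) * cc := by
  have h1 : (1:ℝ) ≤ (n:ℝ) - 1 := by
    have : (2:ℝ) ≤ (n:ℝ) := by exact_mod_cast hn
    linarith
  have hi' : (i:ℝ) ≤ (n:ℝ) - 1 := by
    have : (i:ℝ) ≤ ((n-1:ℕ):ℝ) := by exact_mod_cast hi
    rw [Nat.cast_sub (by omega)] at this; simpa using this
  have hm0 : 0 ≤ m := hm_nonneg x hx n hn
  have key : (i:ℝ)*m/((n:ℝ)-1) ≤ m := by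
    rw [div_le_iff₀ (by linarith)]
    nlinarith
  have e : (i:ℝ) * (-m/((n:ℝ)-1)) = -((i:ℝ)*m/((n:ℝ)-1)) := by ring
  rw [e]
  linarith

lemma one_add_cc_pos {i : ℕ} (hi : i ≤ n - 1) : (0:ℝ) < 1 + (i:ℝ) * cc := by
  have := cc_bound x hx n hn hi
  have := hm_half x hx n hn
  linarith

lemma x_add_cc_nonneg {i : ℕ} (hi : i ≤ n - 1) : (0:ℝ) ≤ x + (i:ℝ) * cc := by
  have := cc_bound x hx n hn hi
  have : x - m ≤ x + (i:ℝ)*cc := by linarith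
  have hmx : m ≤ x := min_le_left _ _
  linarith

lemma ox_add_cc_nonneg {i : ℕ} (hi : i ≤ n - 1) : (0:ℝ) ≤ (1-x) + (i:ℝ) * cc := by
  have := cc_bound x hx n hn hi
  have hmx : m ≤ 1-x := min_le_right _ _
  linarith

lemma rfac_one_pos {r : ℕ} (hr : r ≤ n) : 0 < rfac 1 cc r := by
  apply Finset.prod_pos
  intro i hi
  exact one_add_cc_pos x hx n hn (by have := Finset.mem_range.mp hi; omega)

lemma rfac_shift_pos {r : ℕ} (hr : r ≤ n) : 0 < rfac (1 + (r:ℝ)*cc) cc (n - r) := by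
  apply Finset.prod_pos
  intro i hi
  have hi' : r + i ≤ n - 1 := by have := Finset.mem_range.mp hi; omega
  have := one_add_cc_pos x hx n hn hi'
  have e : 1 + (r:ℝ)*cc + (i:ℝ)*cc = 1 + ((r+i:ℕ):ℝ)*cc := by push_cast; ring
  calc (0:ℝ) < 1 + ((r+i:ℕ):ℝ)*cc := this
    _ = _ := by rw [← e]

lemma polyaProb_nonneg (k : ℕ) (hk : k ≤ n) :
    0 ≤ polyaProb x (1-x) cc n k := by
  unfold polyaProb
  apply div_nonneg
  · apply mul_nonneg
    apply mul_nonneg (by positivity)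
    · exact Finset.prod_nonneg fun i hi =>
        x_add_cc_nonneg x hx n hn (by have := Finset.mem_range.mp hi; omega)
    · exact Finset.prod_nonneg fun i hi =>
        ox_add_cc_nonneg x hx n hn (by have := Finset.mem_range.mp hi; omega)
  · rw [show x + (1-x) = (1:ℝ) by ring]
    exact le_of_lt (rfac_one_pos x hx n hn le_rfl)

lemma T_formula {r : ℕ} (hr : r ≤ n) :
    ∑ k ∈ Finset.range (n+1), polyaProb x (1-x) cc n k * dfal k r
      = dfal n r * rfac x cc r / rfac 1 cc r := by
  have hsplit : rfac 1 cc n = rfac 1 cc r * rfac (1 + (r:ℝ)*cc) cc (n-r) := by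
    rw [← rfac_add]; congr 1; omega
  have hS : ∑ k ∈ Finset.range (n+1), polyaProb x (1-x) cc n k * dfal k r
      = (∑ k ∈ Finset.range (n+1),
          (n.choose k : ℝ) * dfal k r * rfac x cc k * rfac (1-x) cc (n-k)) / rfac 1 cc n := by
    rw [Finset.sum_div]
    apply Finset.sum_congr rfl
    intro k hk
    unfold polyaProb
    rw [show x + (1-x) = (1:ℝ) by ring]
    ring
  rw [hS, moments cc r n x (1-x) hr, show x + (1-x) + (r:ℝ)*cc = 1 + (r:ℝ)*cc by ring,
      hsplit]
  have h1 : rfac (1 + (r:ℝ)*cc) cc (n-r) ≠ 0 := ne_of_gt (rfac_shift_pos x hx n hn hr)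
  have h2 : rfac 1 cc r ≠ 0 := ne_of_gt (rfac_one_pos x hx n hn hr)
  rw [mul_div_mul_right _ _ h1]

end setup
section corollaries
variable (x : ℝ) (hx : x ∈ Set.Icc (0:ℝ) 1) (n : ℕ) (hn : 4 ≤ n)
local notation "m" => min x (1-x)
local notation "cc" => -(min x (1-x)) / ((n:ℝ)-1)
include hx hn

lemma hn0 : (n:ℝ) ≠ 0 := Nat.cast_ne_zero.mpr (by omega)

lemma hn1 : (n:ℝ) - 1 ≠ 0 := by
  have : (4:ℝ) ≤ (n:ℝ) := by exact_mod_cast hn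
  linarith

lemma hcc (j : ℕ) (hj : j ≤ 3) : 1 + (j:ℝ) * cc ≠ 0 :=
  ne_of_gt (one_add_cc_pos x hx n (by omega) (i := j) (by omega))

lemma hmcc : m = -(cc * ((n:ℝ)-1)) := by
  have := hn1 x hx n hn
  field_simp

lemma sum_p_one : ∑ k ∈ Finset.range (n+1), polyaProb x (1-x) cc n k = 1 := by
  have h := T_formula x hx n (by omega) (r := 0) (by omega)
  simp only [dfal_eval0, rfac_eval0, mul_one, one_mul] at h
  simpa using h

lemma sum_p_k : ∑ k ∈ Finset.range (n+1), polyaProb x (1-x) cc n k * (k:ℝ) = (n:ℝ) * x := by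
  have h := T_formula x hx n (by omega) (r := 1) (by omega)
  simp only [dfal_eval1, rfac_eval1, div_one] at h
  exact h

lemma sum_p_mean :
    ∑ k ∈ Finset.range (n+1), polyaProb x (1-x) cc n k * ((k:ℝ)/n - x) = 0 := by
  have h1 := sum_p_k x hx n hn
  have h0 := sum_p_one x hx n hn
  have hn' := hn0 x hx n hn
  have e : ∀ k ∈ Finset.range (n+1), polyaProb x (1-x) cc n k * ((k:ℝ)/n - x)
      = (polyaProb x (1-x) cc n k * (k:ℝ)) * (1/(n:ℝ)) - polyaProb x (1-x) cc n k * x := by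
    intro k hk
    field_simp
  rw [Finset.sum_congr rfl e, Finset.sum_sub_distrib, ← Finset.sum_mul, ← Finset.sum_mul,
      h1, h0]
  field_simp
  ring

lemma sum_S2 :
    (n:ℝ) * ∑ k ∈ Finset.range (n+1), polyaProb x (1-x) cc n k * ((k:ℝ)/n - x)^2
    = x*(1-x)*(1 - m - 1/(n:ℝ)) / (1 - (1+m)*(1/(n:ℝ))) := by
  have h0 := T_formula x hx n (by omega) (r := 0) (by omega)
  have h1 := T_formula x hx n (by omega) (r := 1) (by omega)
  have h2 := T_formula x hx n (by omega) (r := 2) (by omega)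
  have hn' := hn0 x hx n hn
  have hn1' := hn1 x hx n hn
  have hc1 : 1 + cc ≠ 0 := by
    have := hcc x hx n hn 1 (by omega); push_cast at this; rwa [one_mul] at this
  have hmcc' := hmcc x hx n hn
  obtain ⟨c, hc⟩ : ∃ c : ℝ, c = -(min x (1-x))/((n:ℝ)-1) := ⟨_, rfl⟩
  rw [← hc] at h0 h1 h2 hc1 hmcc' ⊢
  have e : ∀ k ∈ Finset.range (n+1), polyaProb x (1-x) c n k * ((k:ℝ)/n - x)^2
      = (polyaProb x (1-x) c n k * dfal k 2) * (1/(n:ℝ)^2)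
        + (polyaProb x (1-x) c n k * dfal k 1) * ((1-2*(n:ℝ)*x)/(n:ℝ)^2)
        + (polyaProb x (1-x) c n k * dfal k 0) * (((n:ℝ)*x)^2/(n:ℝ)^2) := by
    intro k hk
    rw [dfal_eval2, dfal_eval1, dfal_eval0]
    field_simp
    ring
  rw [Finset.sum_congr rfl e, Finset.sum_add_distrib, Finset.sum_add_distrib,
      ← Finset.sum_mul, ← Finset.sum_mul, ← Finset.sum_mul, h2, h1, h0,
      ← algebra2 (n:ℝ) c x m hmcc' hn' hn1' hc1,
      dfal_eval2, dfal_eval1, dfal_eval0, rfac_eval2, rfac_eval1, rfac_eval0,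
      rfac_eval2, rfac_eval1, rfac_eval0]
  clear hc hmcc'
  field_simp

lemma sum_S4 :
    (n:ℝ) * ∑ k ∈ Finset.range (n+1), polyaProb x (1-x) cc n k * ((k:ℝ)/n - x)^4
    = (1/(n:ℝ)) * Gpoly x m (1/(n:ℝ))
        / ((1 - 1/(n:ℝ) - m*(1/(n:ℝ))) * (1 - 1/(n:ℝ) - 2*m*(1/(n:ℝ)))
            * (1 - 1/(n:ℝ) - 3*m*(1/(n:ℝ)))) := by
  have h0 := T_formula x hx n (by omega) (r := 0) (by omega)
  have h1 := T_formula x hx n (by omega) (r := 1) (by omega)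
  have h2 := T_formula x hx n (by omega) (r := 2) (by omega)
  have h3 := T_formula x hx n (by omega) (r := 3) (by omega)
  have h4 := T_formula x hx n (by omega) (r := 4) (by omega)
  have hn' := hn0 x hx n hn
  have hn1' := hn1 x hx n hn
  have hc1 : 1 + cc ≠ 0 := by
    have := hcc x hx n hn 1 (by omega); push_cast at this; rwa [one_mul] at this
  have hc2 : 1 + 2*cc ≠ 0 := by
    have := hcc x hx n hn 2 (by omega); push_cast at this; exact this
  have hc3 : 1 + 3*cc ≠ 0 := by
    have := hcc x hx n hn 3 (by omega); push_cast at this; exact this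
  have hmcc' := hmcc x hx n hn
  obtain ⟨c, hc⟩ : ∃ c : ℝ, c = -(min x (1-x))/((n:ℝ)-1) := ⟨_, rfl⟩
  rw [← hc] at h0 h1 h2 h3 h4 hc1 hc2 hc3 hmcc' ⊢
  have e : ∀ k ∈ Finset.range (n+1), polyaProb x (1-x) c n k * ((k:ℝ)/n - x)^4
      = (polyaProb x (1-x) c n k * dfal k 4) * (1/(n:ℝ)^4)
        + (polyaProb x (1-x) c n k * dfal k 3) * ((6-4*(n:ℝ)*x)/(n:ℝ)^4)
        + (polyaProb x (1-x) c n k * dfal k 2) * ((7-12*(n:ℝ)*x+6*(n:ℝ)^2*x^2)/(n:ℝ)^4)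
        + (polyaProb x (1-x) c n k * dfal k 1)
            * ((1-4*(n:ℝ)*x+6*(n:ℝ)^2*x^2-4*(n:ℝ)^3*x^3)/(n:ℝ)^4)
        + (polyaProb x (1-x) c n k * dfal k 0) * (((n:ℝ)*x)^4/(n:ℝ)^4) := by
    intro k hk
    rw [dfal_eval4, dfal_eval3, dfal_eval2, dfal_eval1, dfal_eval0]
    field_simp
    ring
  rw [Finset.sum_congr rfl e, Finset.sum_add_distrib, Finset.sum_add_distrib,
      Finset.sum_add_distrib, Finset.sum_add_distrib,
      ← Finset.sum_mul, ← Finset.sum_mul, ← Finset.sum_mul, ← Finset.sum_mul,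
      ← Finset.sum_mul, h4, h3, h2, h1, h0,
      ← algebra4 (n:ℝ) c x m hmcc' hn' hn1' hc1 hc2 hc3,
      dfal_eval4, dfal_eval3, dfal_eval2, dfal_eval1, dfal_eval0,
      rfac_eval4, rfac_eval3, rfac_eval2, rfac_eval1, rfac_eval0,
      rfac_eval4, rfac_eval3, rfac_eval2, rfac_eval1, rfac_eval0]
  clear hc hmcc'
  field_simp

end corollaries

theorem Rop_asymptotic (f f' f'' : ℝ → ℝ)
    (hf : ∀ t ∈ Set.Icc (0 : ℝ) 1, HasDerivAt f (f' t) t)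
    (hf' : ∀ t ∈ Set.Icc (0 : ℝ) 1, HasDerivAt f' (f'' t) t)
    (hf'' : ContinuousOn f'' (Set.Icc (0 : ℝ) 1))
    (x : ℝ) (hx : x ∈ Set.Icc (0 : ℝ) 1) :
    Filter.Tendsto (fun n : ℕ => (n : ℝ) * (Rop n f x - f x)) Filter.atTop
      (nhds ((1 / 2) * f'' x * (x * (1 - x) * (1 - min x (1 - x))))) := by
  obtain ⟨BND, hBND⟩ := (isCompact_Icc : IsCompact (Set.Icc (0:ℝ) 1)).exists_bound_of_continuousOn hf''
  set M : ℝ := max BND 0 with hMdef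
  have hMb : ∀ u ∈ Set.Icc (0:ℝ) 1, |f'' u| ≤ M := fun u hu =>
    le_trans (by simpa using hBND u hu) (le_max_left _ _)
  have hM0 : (0:ℝ) ≤ M := le_max_right _ _
  have Hex : ∀ t : ℝ, ∃ ξ, ξ ∈ Set.Icc (0:ℝ) 1 ∧ (t ∈ Set.Icc (0:ℝ) 1 →
      (|ξ - x| ≤ |t - x| ∧ f t = f x + f' x * (t-x) + f'' ξ / 2 * (t-x)^2)) := by
    intro t
    by_cases ht : t ∈ Set.Icc (0:ℝ) 1
    · obtain ⟨ξ, h1, h2, h3⟩ := taylor_xi f f' f'' hf hf' x t hx ht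
      exact ⟨ξ, h1, fun _ => ⟨h2, h3⟩⟩
    · exact ⟨x, hx, fun h => absurd h ht⟩
  choose xi hxiIcc hxiP using Hex
  set V : ℝ := x * (1 - x) * (1 - min x (1 - x)) with hVdef
  have hm0 : 0 ≤ min x (1-x) := le_min hx.1 (by linarith [hx.2])
  have hm1 : min x (1-x) ≤ 1/2 := by
    rcases le_total x (1-x) with h | h
    · rw [min_eq_left h]; linarith [hx.1, hx.2]
    · rw [min_eq_right h]; linarith [hx.1, hx.2]
  have hV0 : 0 ≤ V := by
    apply mul_nonneg (mul_nonneg hx.1 (by linarith [hx.2]))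
    linarith
  set W2 : ℕ → ℝ := fun n => (n:ℝ) * ∑ k ∈ Finset.range (n+1),
    polyaProb x (1-x) (-(min x (1-x)) / ((n:ℝ)-1)) n k * ((k:ℝ)/n - x)^2 with hW2def
  set W4 : ℕ → ℝ := fun n => (n:ℝ) * ∑ k ∈ Finset.range (n+1),
    polyaProb x (1-x) (-(min x (1-x)) / ((n:ℝ)-1)) n k * ((k:ℝ)/n - x)^4 with hW4def
  set err : ℕ → ℝ := fun n => (n:ℝ) * ∑ k ∈ Finset.range (n+1),
    polyaProb x (1-x) (-(min x (1-x)) / ((n:ℝ)-1)) n k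
      * ((f'' (xi ((k:ℝ)/n)) - f'' x)/2 * ((k:ℝ)/n - x)^2) with herrdef
  -- membership of sample points
  have hmem : ∀ n : ℕ, 4 ≤ n → ∀ k ∈ Finset.range (n+1), ((k:ℝ)/n) ∈ Set.Icc (0:ℝ) 1 := by
    intro n hn4 k hk
    have hkn : (k:ℝ) ≤ (n:ℝ) := by
      exact_mod_cast Nat.lt_succ_iff.mp (Finset.mem_range.mp hk)
    have hnpos : (0:ℝ) < (n:ℝ) := by exact_mod_cast (by omega : 0 < n)
    constructor
    · positivity
    · rw [div_le_one hnpos]; exact hkn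
  -- key identity
  have hkey : ∀ n : ℕ, 4 ≤ n → (n:ℝ) * (Rop n f x - f x) = f'' x/2 * W2 n + err n := by
    intro n hn4
    have hsplit : ∀ k ∈ Finset.range (n+1),
        polyaProb x (1-x) (-(min x (1-x)) / ((n:ℝ)-1)) n k * f ((k:ℝ)/n)
        = polyaProb x (1-x) (-(min x (1-x)) / ((n:ℝ)-1)) n k * f x
          + (polyaProb x (1-x) (-(min x (1-x)) / ((n:ℝ)-1)) n k * ((k:ℝ)/n - x)) * f' x
          + (polyaProb x (1-x) (-(min x (1-x)) / ((n:ℝ)-1)) n k * ((k:ℝ)/n - x)^2) * (f'' x/2)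
          + polyaProb x (1-x) (-(min x (1-x)) / ((n:ℝ)-1)) n k
              * ((f'' (xi ((k:ℝ)/n)) - f'' x)/2 * ((k:ℝ)/n - x)^2) := by
      intro k hk
      obtain ⟨_, h3⟩ := hxiP _ (hmem n hn4 k hk)
      rw [h3]
      ring
    have hRop : Rop n f x = ∑ k ∈ Finset.range (n+1),
        polyaProb x (1-x) (-(min x (1-x)) / ((n:ℝ)-1)) n k * f ((k:ℝ)/n) := rfl
    rw [hRop, Finset.sum_congr rfl hsplit, Finset.sum_add_distrib, Finset.sum_add_distrib,
        Finset.sum_add_distrib, ← Finset.sum_mul, ← Finset.sum_mul, ← Finset.sum_mul,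
        sum_p_one x hx n hn4, sum_p_mean x hx n hn4]
    simp only [hW2def, herrdef]
    ring
  -- limits of W2 and W4
  have hW2lim : Filter.Tendsto W2 Filter.atTop (nhds V) := by
    have cont2 : ContinuousAt
        (fun t : ℝ => x*(1-x)*(1 - min x (1-x) - t) / (1 - (1+min x (1-x))*t)) 0 := by
      apply ContinuousAt.div
      · fun_prop
      · fun_prop
      · norm_num
    have hval : x*(1-x)*(1 - min x (1-x) - 0) / (1 - (1+min x (1-x))*0) = V := by
      norm_num
      exact hVdef.symm
    have comp := cont2.tendsto.comp tendsto_one_div_atTop_nhds_zero_nat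
    rw [hval] at comp
    apply comp.congr'
    filter_upwards [Filter.eventually_ge_atTop 4] with n hn4
    simpa using (sum_S2 x hx n hn4).symm
  have hW4lim : Filter.Tendsto W4 Filter.atTop (nhds 0) := by
    have cont4 : ContinuousAt
        (fun t : ℝ => t * Gpoly x (min x (1-x)) t
          / ((1 - t - (min x (1-x))*t) * (1 - t - 2*(min x (1-x))*t)
              * (1 - t - 3*(min x (1-x))*t))) 0 := by
      apply ContinuousAt.div
      · simp only [Gpoly]; fun_prop
      · fun_prop
      · norm_num
    have hval : (0:ℝ) * Gpoly x (min x (1-x)) 0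
          / ((1 - 0 - (min x (1-x))*0) * (1 - 0 - 2*(min x (1-x))*0)
              * (1 - 0 - 3*(min x (1-x))*0)) = 0 := by
      norm_num
    have comp := cont4.tendsto.comp tendsto_one_div_atTop_nhds_zero_nat
    rw [hval] at comp
    apply comp.congr'
    filter_upwards [Filter.eventually_ge_atTop 4] with n hn4
    have := (sum_S4 x hx n hn4).symm
    simp only [hW4def]
    simpa [mul_comm, mul_div_assoc] using this
  -- nonnegativity
  have hp_nonneg : ∀ n : ℕ, 4 ≤ n → ∀ k ∈ Finset.range (n+1),
      0 ≤ polyaProb x (1-x) (-(min x (1-x)) / ((n:ℝ)-1)) n k := by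
    intro n hn4 k hk
    exact polyaProb_nonneg x hx n (by omega) k (by have := Finset.mem_range.mp hk; omega)
  have hW2nn : ∀ n : ℕ, 4 ≤ n → 0 ≤ W2 n := by
    intro n hn4
    simp only [hW2def]
    apply mul_nonneg (by positivity)
    exact Finset.sum_nonneg fun k hk => mul_nonneg (hp_nonneg n hn4 k hk) (by positivity)
  have hW4nn : ∀ n : ℕ, 4 ≤ n → 0 ≤ W4 n := by
    intro n hn4
    simp only [hW4def]
    apply mul_nonneg (by positivity)
    exact Finset.sum_nonneg fun k hk => mul_nonneg (hp_nonneg n hn4 k hk) (by positivity)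
  -- error bound
  have herrbound : ∀ ε δ : ℝ, 0 < ε → 0 < δ →
      (∀ u ∈ Set.Icc (0:ℝ) 1, |u - x| < δ → |f'' u - f'' x| < ε) →
      ∀ n : ℕ, 4 ≤ n → |err n| ≤ ε/2 * W2 n + (M/δ^2) * W4 n := by
    intro ε δ hε hδ hcont n hn4
    have hδ2 : (0:ℝ) < δ^2 := by positivity
    have hnn : (0:ℝ) ≤ (n:ℝ) := by positivity
    simp only [herrdef, hW2def, hW4def]
    have key : |∑ k ∈ Finset.range (n+1),
          polyaProb x (1-x) (-(min x (1-x)) / ((n:ℝ)-1)) n k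
            * ((f'' (xi ((k:ℝ)/n)) - f'' x)/2 * ((k:ℝ)/n - x)^2)|
        ≤ ∑ k ∈ Finset.range (n+1),
            (ε/2 * (polyaProb x (1-x) (-(min x (1-x)) / ((n:ℝ)-1)) n k * ((k:ℝ)/n - x)^2)
              + (M/δ^2) * (polyaProb x (1-x) (-(min x (1-x)) / ((n:ℝ)-1)) n k * ((k:ℝ)/n - x)^4)) := by
      refine le_trans (Finset.abs_sum_le_sum_abs _ _) (Finset.sum_le_sum ?_)
      intro k hk
      have hpk := hp_nonneg n hn4 k hk
      have hu := hmem n hn4 k hk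
      have hxiu := hxiIcc ((k:ℝ)/n)
      have hxiclose := (hxiP _ hu).1
      have h1 : |polyaProb x (1-x) (-(min x (1-x)) / ((n:ℝ)-1)) n k
            * ((f'' (xi ((k:ℝ)/n)) - f'' x)/2 * ((k:ℝ)/n - x)^2)|
          = polyaProb x (1-x) (-(min x (1-x)) / ((n:ℝ)-1)) n k
            * (|f'' (xi ((k:ℝ)/n)) - f'' x|/2 * ((k:ℝ)/n - x)^2) := by
        rw [abs_mul, abs_of_nonneg hpk, abs_mul, abs_div, abs_two, abs_pow, sq_abs]
      rw [h1]
      rcases lt_or_ge |(k:ℝ)/n - x| δ with hnear | hfar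
      · have habs : |f'' (xi ((k:ℝ)/n)) - f'' x| < ε :=
          hcont _ hxiu (lt_of_le_of_lt hxiclose hnear)
        nlinarith [mul_nonneg (mul_nonneg (div_nonneg hM0 hδ2.le) hpk)
            (pow_nonneg (sq_nonneg ((k:ℝ)/n - x)) 2),
          mul_nonneg (mul_nonneg (sub_nonneg.mpr habs.le) hpk) (sq_nonneg ((k:ℝ)/n - x)),
          sq_nonneg ((k:ℝ)/n - x)]
      · have h2M : |f'' (xi ((k:ℝ)/n)) - f'' x| ≤ 2*M := by
          calc |f'' (xi ((k:ℝ)/n)) - f'' x| ≤ |f'' (xi ((k:ℝ)/n))| + |f'' x| := abs_sub _ _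
            _ ≤ M + M := add_le_add (hMb _ hxiu) (hMb x hx)
            _ = 2*M := by ring
        have hsq : δ^2 ≤ ((k:ℝ)/n - x)^2 := by
          calc δ^2 ≤ |(k:ℝ)/n - x|^2 := by nlinarith [abs_nonneg ((k:ℝ)/n - x)]
            _ = ((k:ℝ)/n - x)^2 := sq_abs _
        have key2 : M * (polyaProb x (1-x) (-(min x (1-x)) / ((n:ℝ)-1)) n k * ((k:ℝ)/n - x)^2)
            ≤ (M/δ^2) * (polyaProb x (1-x) (-(min x (1-x)) / ((n:ℝ)-1)) n k * ((k:ℝ)/n - x)^4) := by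
          rw [div_mul_eq_mul_div, le_div_iff₀ hδ2]
          nlinarith [mul_le_mul_of_nonneg_right hsq (sq_nonneg ((k:ℝ)/n - x)),
            mul_nonneg hM0 hpk]
        nlinarith [mul_nonneg hpk (sq_nonneg ((k:ℝ)/n - x)), hε.le,
          mul_nonneg hpk (sq_nonneg ((k:ℝ)/n - x))]
    calc |(n:ℝ) * ∑ k ∈ Finset.range (n+1),
            polyaProb x (1-x) (-(min x (1-x)) / ((n:ℝ)-1)) n k
              * ((f'' (xi ((k:ℝ)/n)) - f'' x)/2 * ((k:ℝ)/n - x)^2)|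
        = (n:ℝ) * |∑ k ∈ Finset.range (n+1),
            polyaProb x (1-x) (-(min x (1-x)) / ((n:ℝ)-1)) n k
              * ((f'' (xi ((k:ℝ)/n)) - f'' x)/2 * ((k:ℝ)/n - x)^2)| := by
          rw [abs_mul, abs_of_nonneg hnn]
      _ ≤ (n:ℝ) * ∑ k ∈ Finset.range (n+1),
            (ε/2 * (polyaProb x (1-x) (-(min x (1-x)) / ((n:ℝ)-1)) n k * ((k:ℝ)/n - x)^2)
              + (M/δ^2) * (polyaProb x (1-x) (-(min x (1-x)) / ((n:ℝ)-1)) n k * ((k:ℝ)/n - x)^4)) :=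
          mul_le_mul_of_nonneg_left key hnn
      _ = ε/2 * ((n:ℝ) * ∑ k ∈ Finset.range (n+1),
              polyaProb x (1-x) (-(min x (1-x)) / ((n:ℝ)-1)) n k * ((k:ℝ)/n - x)^2)
            + (M/δ^2) * ((n:ℝ) * ∑ k ∈ Finset.range (n+1),
              polyaProb x (1-x) (-(min x (1-x)) / ((n:ℝ)-1)) n k * ((k:ℝ)/n - x)^4) := by
          rw [Finset.sum_add_distrib, ← Finset.mul_sum, ← Finset.mul_sum]
          ring
  -- err tends to zero
  have herrlim : Filter.Tendsto err Filter.atTop (nhds 0) := by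
    rw [Metric.tendsto_atTop]
    intro ε' hε'
    have hεq : 0 < ε'/(2*(V+1)) := by positivity
    obtain ⟨δ, hδ0, hδ⟩ : ∃ δ > 0, ∀ u ∈ Set.Icc (0:ℝ) 1, |u - x| < δ →
        |f'' u - f'' x| < ε'/(2*(V+1)) := by
      have hcx := hf'' x hx
      rw [Metric.continuousWithinAt_iff] at hcx
      obtain ⟨δ, hδ0, hδ⟩ := hcx _ hεq
      refine ⟨δ, hδ0, fun u hu hdist => ?_⟩
      have := hδ hu (by rwa [Real.dist_eq])
      rwa [Real.dist_eq] at this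
    have hev2 : ∀ᶠ n in Filter.atTop, W2 n < V + 1 :=
      hW2lim.eventually (eventually_lt_nhds (by linarith : V < V + 1))
    have hev4 : ∀ᶠ n in Filter.atTop, (M/δ^2) * W4 n < ε'/4 := by
      have h := hW4lim.const_mul (M/δ^2)
      rw [mul_zero] at h
      exact h.eventually (eventually_lt_nhds (by linarith : (0:ℝ) < ε'/4))
    rw [Filter.eventually_atTop] at hev2 hev4
    obtain ⟨N1, hN1⟩ := hev2
    obtain ⟨N2, hN2⟩ := hev4
    refine ⟨max (max N1 N2) 4, fun n hn => ?_⟩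
    have hn4 : 4 ≤ n := le_trans (le_max_right _ _) hn
    have hn1 : N1 ≤ n := le_trans (le_trans (le_max_left _ _) (le_max_left _ _)) hn
    have hn2 : N2 ≤ n := le_trans (le_trans (le_max_right _ _) (le_max_left _ _)) hn
    have hb := herrbound _ δ hεq hδ0 hδ n hn4
    rw [Real.dist_eq, sub_zero]
    have e1 : ε'/(2*(V+1))/2 * W2 n ≤ ε'/(2*(V+1))/2 * (V+1) :=
      mul_le_mul_of_nonneg_left (le_of_lt (hN1 n hn1)) (by positivity)
    have e2 : ε'/(2*(V+1))/2 * (V+1) = ε'/4 := by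
      have : V + 1 ≠ 0 := by linarith
      field_simp
      ring
    have := hN2 n hn2
    calc |err n| ≤ ε'/(2*(V+1))/2 * W2 n + (M/δ^2) * W4 n := hb
      _ < ε'/(2*(V+1))/2 * (V+1) + ε'/4 := add_lt_add_of_le_of_lt e1 this
      _ < ε' := by rw [e2]; linarith
  -- final assembly
  have hfinal := (hW2lim.const_mul (f'' x/2)).add herrlim
  rw [add_zero] at hfinal
  have heq : ∀ᶠ n in Filter.atTop,
      f'' x/2 * W2 n + err n = (n:ℝ) * (Rop n f x - f x) := by
    filter_upwards [Filter.eventually_ge_atTop 4] with n hn4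
    exact (hkey n hn4).symm
  have hT := hfinal.congr' heq
  rw [show f'' x/2 * V = (1/2) * f'' x * V from by ring] at hT
  exact hT
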